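/- Let S, R : [0,∞) × D → D be two maps into a metric space (D, d) such that: (i) both are semigroups (S_0 = id, S_{ξ₁}S_{ξ₂} = S_{ξ₁+ξ₂}, same for R); (ii) both are Lipschitz with constant L: d(S_ξ a, S_ξ b) ≤ L·d(a,b) and similarly for R; (iii) for every a ∈ D, lim_{μ→0⁺} d(S_μ a, R_μ a)/μ = 0 uniformly in a. Then S_ξ = R_ξ for all ξ ≥ 0. -/

import Mathlib

open Filter

/-- Uniqueness of Lipschitz semigroups with the same local flow: two Lipschitz
semigroups whose trajectories are tangent at time zero, uniformly in the data,
coincide. -/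
theorem lipschitz_semigroups_with_same_local_flow_coincide
    {D : Type*} [MetricSpace D] (L : ℝ) (hL : 1 ≤ L)
    (S R : ℝ → D → D)
    (hS0 : ∀ a, S 0 a = a) (hR0 : ∀ a, R 0 a = a)
    (hSsemi : ∀ ξ₁ ≥ (0:ℝ), ∀ ξ₂ ≥ (0:ℝ), ∀ a, S ξ₁ (S ξ₂ a) = S (ξ₁ + ξ₂) a)
    (hRsemi : ∀ ξ₁ ≥ (0:ℝ), ∀ ξ₂ ≥ (0:ℝ), ∀ a, R ξ₁ (R ξ₂ a) = R (ξ₁ + ξ₂) a)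
    (hSLip : ∀ ξ ≥ (0:ℝ), ∀ a b, dist (S ξ a) (S ξ b) ≤ L * dist a b)
    (hRLip : ∀ ξ ≥ (0:ℝ), ∀ a b, dist (R ξ a) (R ξ b) ≤ L * dist a b)
    (htangent : ∀ ε > (0:ℝ), ∃ μ₀ > (0:ℝ), ∀ μ, 0 < μ → μ < μ₀ →
        ∀ a, dist (S μ a) (R μ a) ≤ ε * μ) :
    ∀ ξ ≥ (0:ℝ), ∀ a, S ξ a = R ξ a := by
  intro ξ hξ a
  rcases eq_or_lt_of_le hξ with h0 | hξpos
  · rw [← h0, hS0, hR0]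
  -- key estimate: for every ε > 0, dist (S ξ a) (R ξ a) ≤ L * ξ * ε
  have key : ∀ ε > (0:ℝ), dist (S ξ a) (R ξ a) ≤ L * ξ * ε := by
    intro ε hε
    obtain ⟨μ₀, hμ₀, hμ⟩ := htangent ε hε
    -- choose n with ξ / n < μ₀
    obtain ⟨n, hn⟩ := exists_nat_gt (ξ / μ₀)
    have hnpos : 0 < (n:ℝ) := lt_of_le_of_lt (div_nonneg hξ hμ₀.le) hn
    set μ : ℝ := ξ / n with hμdef
    have hμpos : 0 < μ := div_pos hξpos hnpos
    have hμlt : μ < μ₀ := by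
      rw [hμdef, div_lt_iff₀ hnpos]
      calc ξ = μ₀ * (ξ / μ₀) := by field_simp
        _ < μ₀ * n := by exact mul_lt_mul_of_pos_left hn hμ₀
    -- induction: ∀ k, ∀ b, dist (S (k*μ) b) (R (k*μ) b) ≤ k * (L * ε * μ)
    have ind : ∀ k : ℕ, ∀ b, dist (S (k * μ) b) (R (k * μ) b) ≤ k * (L * ε * μ) := by
      intro k
      induction k with
      | zero => intro b; simp [hS0, hR0]
      | succ k ih =>
        intro b
        have hkμ : (0:ℝ) ≤ k * μ := by positivity
        have hS' : S ((k:ℝ) * μ) (S μ b) = S (((k:ℕ)+1 : ℕ) * μ) b := by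
          rw [hSsemi _ hkμ _ hμpos.le]; push_cast; ring_nf
        have hR' : R ((k:ℝ) * μ) (R μ b) = R (((k:ℕ)+1 : ℕ) * μ) b := by
          rw [hRsemi _ hkμ _ hμpos.le]; push_cast; ring_nf
        calc dist (S (((k:ℕ)+1 : ℕ) * μ) b) (R (((k:ℕ)+1 : ℕ) * μ) b)
            ≤ dist (S ((k:ℝ) * μ) (S μ b)) (R ((k:ℝ) * μ) (S μ b))
              + dist (R ((k:ℝ) * μ) (S μ b)) (R ((k:ℝ) * μ) (R μ b)) := by
              rw [hS', hR']; exact dist_triangle _ _ _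
          _ ≤ k * (L * ε * μ) + L * dist (S μ b) (R μ b) := by
              gcongr
              · exact ih _
              · exact hRLip _ hkμ _ _
          _ ≤ k * (L * ε * μ) + L * (ε * μ) := by
              gcongr
              exact hμ μ hμpos hμlt b
          _ = ((k:ℕ)+1 : ℕ) * (L * ε * μ) := by push_cast; ring
    have hnμ : (n:ℝ) * μ = ξ := by rw [hμdef]; field_simp
    have := ind n a
    rw [hnμ] at this
    calc dist (S ξ a) (R ξ a) ≤ n * (L * ε * μ) := this
      _ = L * ξ * ε := by rw [hμdef]; field_simp
  -- conclude dist = 0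
  have hd : dist (S ξ a) (R ξ a) ≤ 0 := by
    have hLξ : 0 < L * ξ := by positivity
    refine le_of_forall_pos_le_add ?_
    intro ε hε
    have := key (ε / (L * ξ)) (by positivity)
    calc dist (S ξ a) (R ξ a) ≤ L * ξ * (ε / (L * ξ)) := this
      _ = ε := by field_simp
      _ ≤ 0 + ε := by linarith
  exact dist_le_zero.mp hd
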